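/- arXiv:1206.6638 — 7 statements merged into one kernel-verified Lean document; each statement's English description precedes it below -/
import Mathlib

section
/- A perfect profinite group is topologically normally generated by a single element: there exists g ∈ G such that the smallest closed normal subgroup of G containing g equals G. -/
open Subgroup Pointwise
open scoped commutatorElement

private lemma comm_top_of_surjective {A B : Type*} [Group A] [Group B] (f : A →* B)
    (hf : Function.Surjective f) (h : commutator A = ⊤) : commutator B = ⊤ := by
  calc commutator B = ⁅Subgroup.map f ⊤, Subgroup.map f ⊤⁆ := by
        rw [Subgroup.map_top_of_surjective f hf, _root_.commutator_def]
    _ = Subgroup.map f ⁅(⊤ : Subgroup A), ⊤⁆ := (Subgroup.map_commutator ⊤ ⊤ f).symm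
    _ = ⊤ := by rw [← _root_.commutator_def, h, Subgroup.map_top_of_surjective f hf]

private lemma commutator_subgroup_eq_self {Q : Type*} [Group Q] (H : Subgroup Q)
    (h : commutator (↥H) = ⊤) : ⁅H, H⁆ = H := by
  have h2 := Subgroup.map_commutator (⊤ : Subgroup ↥H) (⊤ : Subgroup ↥H) H.subtype
  rw [← _root_.commutator_def, h] at h2
  have h3 : Subgroup.map H.subtype ⊤ = H := by
    rw [← MonoidHom.range_eq_map, Subgroup.range_subtype]
  rw [h3] at h2
  exact h2.symm

private lemma bij_compl {Q : Type*} [Group Q] (H N : Subgroup Q) [N.Normal]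
    (hdisj : H ⊓ N = ⊥) (hsup : H ⊔ N = ⊤) :
    Function.Bijective ((QuotientGroup.mk' N).comp H.subtype) := by
  constructor
  · apply (injective_iff_map_eq_one _).mpr
    intro a ha
    have h1 : (a : Q) ∈ N := (QuotientGroup.eq_one_iff (a : Q)).mp ha
    have h2 : (a : Q) ∈ H ⊓ N := ⟨a.2, h1⟩
    rw [hdisj] at h2
    exact Subtype.ext (Subgroup.mem_bot.mp h2)
  · intro z
    obtain ⟨q, rfl⟩ := QuotientGroup.mk'_surjective N z
    have hq : q ∈ (H : Set Q) * (N : Set Q) := by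
      rw [← Subgroup.mul_normal H N, hsup]
      exact Subgroup.mem_top q
    obtain ⟨h, hh, nn, hnn, rfl⟩ := hq
    refine ⟨⟨h, hh⟩, ?_⟩
    show QuotientGroup.mk' N h = QuotientGroup.mk' N (h * nn)
    exact (QuotientGroup.mk'_eq_mk' N).mpr ⟨nn, hnn, rfl⟩

private lemma exists_normalClosure_eq_top :
    ∀ (n : ℕ) (Q : Type u) [Group Q] [Finite Q], Nat.card Q ≤ n →
      commutator Q = ⊤ → ∃ q : Q, Subgroup.normalClosure {q} = ⊤ := by
  intro n
  induction n with
  | zero =>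
    intro Q _ _ hcard _
    have := Nat.card_pos (α := Q)
    omega
  | succ n ih =>
    intro Q _ _ hcard hperf
    by_cases htriv : ∀ q : Q, q = 1
    · exact ⟨1, Subgroup.eq_top_iff' _ |>.mpr fun x => by rw [htriv x]; exact one_mem _⟩
    push_neg at htriv
    obtain ⟨q₀, hq₀⟩ := htriv
    have htopS : (⊤ : Subgroup Q) ∈ {N : Subgroup Q | N.Normal ∧ N ≠ ⊥} :=
      ⟨inferInstance, fun h => hq₀ (Subgroup.mem_bot.mp (h ▸ Subgroup.mem_top q₀))⟩
    obtain ⟨N, hNS, hmin⟩ := Set.exists_min_image {N : Subgroup Q | N.Normal ∧ N ≠ ⊥}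
      (fun N => Nat.card N) (Set.toFinite _) ⟨⊤, htopS⟩
    obtain ⟨hNnormal, hNbot⟩ := hNS
    have minimal_eq : ∀ N' : Subgroup Q, N'.Normal → N' ≠ ⊥ → N' ≤ N → N' = N := fun N' h1 h2 hle =>
      Subgroup.eq_of_le_of_card_ge hle (hmin N' ⟨h1, h2⟩)
    by_cases hNtop : N = ⊤
    · refine ⟨q₀, ?_⟩
      have h1 : Subgroup.normalClosure {q₀} ≠ ⊥ := by
        intro h
        exact hq₀ (Subgroup.mem_bot.mp (h ▸ Subgroup.subset_normalClosure rfl))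
      have := minimal_eq _ Subgroup.normalClosure_normal h1 (hNtop ▸ le_top)
      rw [this, hNtop]
    · -- N is a proper nontrivial minimal normal subgroup
      set π := QuotientGroup.mk' N with hπ
      have hsurj := QuotientGroup.mk'_surjective N
      have hperfQN : commutator (Q ⧸ N) = ⊤ := comm_top_of_surjective π hsurj hperf
      have hcardN : 2 ≤ Nat.card N := by
        have := Subgroup.one_lt_card_iff_ne_bot (H := N) |>.mpr hNbot
        omega
      have hcardQN : Nat.card (Q ⧸ N) ≤ n := by
        have h1 : Nat.card Q = Nat.card (Q ⧸ N) * Nat.card N :=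
          Subgroup.card_eq_card_quotient_mul_card_subgroup N
        have h2 := Nat.card_pos (α := Q ⧸ N)
        nlinarith
      obtain ⟨qbar, hqbar⟩ := ih (Q ⧸ N) hcardQN hperfQN
      obtain ⟨g, rfl⟩ := hsurj qbar
      set H := Subgroup.normalClosure {g} with hHdef
      have hHnormal : H.Normal := Subgroup.normalClosure_normal
      have hmapH : Subgroup.map π H = ⊤ := by
        rw [hHdef, Subgroup.map_normalClosure _ _ hsurj, Set.image_singleton, hqbar]
      have hsup : H ⊔ N = ⊤ := by
        have h1 : Subgroup.map π (H ⊔ N) = ⊤ :=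
          top_unique (by rw [← hmapH]; exact Subgroup.map_mono le_sup_left)
        have h2 : Subgroup.comap π (Subgroup.map π (H ⊔ N)) = H ⊔ N := by
          rw [Subgroup.comap_map_eq, QuotientGroup.ker_mk', sup_assoc, sup_idem]
        rw [h1, Subgroup.comap_top] at h2
        exact h2.symm
      by_cases hH : H = ⊤
      · exact ⟨g, hH⟩
      have hdisj : H ⊓ N = ⊥ := by
        by_contra hne
        have h1 := minimal_eq (H ⊓ N) (Subgroup.normal_inf_normal H N) hne inf_le_right
        have h2 : N ≤ H := h1 ▸ inf_le_left
        exact hH (by rw [← hsup, sup_eq_left.mpr h2])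
      have hdisj' : N ⊓ H = ⊥ := by rw [inf_comm]; exact hdisj
      have hsup' : N ⊔ H = ⊤ := by rw [sup_comm]; exact hsup
      have hcomm : ∀ x ∈ H, ∀ y ∈ N, Commute x y := fun x hx y hy =>
        Subgroup.commute_of_normal_of_disjoint H N hHnormal hNnormal
          (disjoint_iff.mpr hdisj) x y hx hy
      -- perfectness of H and N
      have hperfH : commutator (↥H) = ⊤ := by
        have hbij := bij_compl H N hdisj hsup
        have e := MulEquiv.ofBijective _ hbij
        exact comm_top_of_surjective e.symm.toMonoidHom e.symm.surjective hperfQN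
      have hperfQH : commutator (Q ⧸ H) = ⊤ :=
        comm_top_of_surjective (QuotientGroup.mk' H) (QuotientGroup.mk'_surjective H) hperf
      have hperfN : commutator (↥N) = ⊤ := by
        have hbij := bij_compl N H hdisj' hsup'
        have e := MulEquiv.ofBijective _ hbij
        exact comm_top_of_surjective e.symm.toMonoidHom e.symm.surjective hperfQH
      -- apply induction hypothesis to N
      have hcardNlt : Nat.card ↥N ≤ n := by
        have h1 : Nat.card ↥N < Nat.card Q := by
          by_contra hle
          exact hNtop (Subgroup.eq_top_of_le_card N (by omega))
        omega
      obtain ⟨n₀, hn₀⟩ := ih ↥N hcardNlt hperfN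
      -- the element g * n₀ normally generates Q
      set w := g * (↑n₀ : Q) with hwdef
      set R := Subgroup.normalClosure {w} with hRdef
      have hRnormal : R.Normal := Subgroup.normalClosure_normal
      have hwR : w ∈ R := Subgroup.subset_normalClosure rfl
      have hgH : g ∈ H := Subgroup.subset_normalClosure rfl
      have hnN : (↑n₀ : Q) ∈ N := n₀.2
      set π' := QuotientGroup.mk' R with hπ'
      have hker : ∀ x : Q, π' x = 1 ↔ x ∈ R := fun x => QuotientGroup.eq_one_iff x
      -- commutators with w
      have hcw : ∀ a : Q, ⁅a, w⁆ ∈ R := fun a => by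
        rw [commutatorElement_def]
        exact mul_mem (hRnormal.conj_mem w hwR a) (inv_mem hwR)
      have hkey1 : ∀ a ∈ H, ⁅a, g⁆ ∈ R := by
        intro a ha
        have heq : ⁅a, w⁆ = ⁅a, g⁆ := by
          have hc : (↑n₀ : Q) * a⁻¹ = a⁻¹ * ↑n₀ := (hcomm a⁻¹ (inv_mem ha) _ hnN).symm
          simp only [commutatorElement_def, hwdef, mul_inv_rev]
          calc a * (g * ↑n₀) * a⁻¹ * ((↑n₀)⁻¹ * g⁻¹)
              = a * g * (↑n₀ * a⁻¹ * (↑n₀)⁻¹) * g⁻¹ := by group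
            _ = a * g * (a⁻¹ * ↑n₀ * (↑n₀)⁻¹) * g⁻¹ := by rw [hc]
            _ = a * g * a⁻¹ * g⁻¹ := by group
        exact heq ▸ hcw a
      have hkey2 : ∀ b ∈ N, ⁅b, (↑n₀ : Q)⁆ ∈ R := by
        intro b hb
        have heq : ⁅b, w⁆ = g * ⁅b, (↑n₀ : Q)⁆ * g⁻¹ := by
          have hc : b * g = g * b := (hcomm g hgH b hb).symm
          simp only [commutatorElement_def, hwdef, mul_inv_rev]
          calc b * (g * ↑n₀) * b⁻¹ * ((↑n₀)⁻¹ * g⁻¹)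
              = b * g * (↑n₀ * b⁻¹ * (↑n₀)⁻¹ * g⁻¹) := by group
            _ = g * b * (↑n₀ * b⁻¹ * (↑n₀)⁻¹ * g⁻¹) := by rw [hc]
            _ = g * (b * ↑n₀ * b⁻¹ * (↑n₀)⁻¹) * g⁻¹ := by group
        have h1 := hcw b
        rw [heq] at h1
        have h2 := hRnormal.conj_mem _ h1 g⁻¹
        simpa [mul_assoc] using h2
      -- π' g is central in Q ⧸ R
      have hgn : π' g = (π' ↑n₀)⁻¹ := by
        have h1 : π' g * π' ↑n₀ = 1 := by
          rw [← map_mul]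
          exact (hker w).mpr hwR
        exact mul_eq_one_iff_eq_inv.mp h1
      have hcomH : ∀ a ∈ H, Commute (π' a) (π' g) := by
        intro a ha
        apply commutatorElement_eq_one_iff_commute.mp
        rw [← map_commutatorElement]
        exact (hker _).mpr (hkey1 a ha)
      have hcomN : ∀ b ∈ N, Commute (π' b) (π' ↑n₀) := by
        intro b hb
        apply commutatorElement_eq_one_iff_commute.mp
        rw [← map_commutatorElement]
        exact (hker _).mpr (hkey2 b hb)
      have hc_center : π' g ∈ Subgroup.center (Q ⧸ R) := by
        rw [Subgroup.mem_center_iff]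
        intro z
        obtain ⟨q, rfl⟩ := QuotientGroup.mk'_surjective R z
        have hq : q ∈ (H : Set Q) * (N : Set Q) := by
          rw [← Subgroup.mul_normal H N, hsup]
          exact Subgroup.mem_top q
        obtain ⟨h, hh, nn, hnn, rfl⟩ := hq
        have c1 : Commute (π' h) (π' g) := hcomH h hh
        have c2 : Commute (π' nn) (π' g) := by
          rw [hgn]
          exact (hcomN nn hnn).inv_right
        calc π' (h * nn) * π' g = π' h * π' nn * π' g := by rw [map_mul]
          _ = π' g * (π' h * π' nn) := by
              rw [mul_assoc, c2.eq, ← mul_assoc, c1.eq, mul_assoc]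
          _ = π' g * π' (h * nn) := by rw [map_mul]
      have hncl_center : Subgroup.normalClosure {π' g} ≤ Subgroup.center (Q ⧸ R) :=
        Subgroup.normalClosure_le_normal (Set.singleton_subset_iff.mpr hc_center)
      -- H ≤ R
      have hmapH' : Subgroup.map π' H = Subgroup.normalClosure {π' g} := by
        rw [hHdef, Subgroup.map_normalClosure _ _ (QuotientGroup.mk'_surjective R),
          Set.image_singleton]
      have hHR : H ≤ R := by
        have hcomm_le : ⁅H, H⁆ ≤ R := by
          rw [Subgroup.commutator_le]
          intro x hx y hy
          have hy' : π' y ∈ Subgroup.center (Q ⧸ R) :=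
            hncl_center (hmapH' ▸ Subgroup.mem_map_of_mem π' hy)
          have : π' ⁅x, y⁆ = 1 := by
            rw [map_commutatorElement]
            exact commutatorElement_eq_one_iff_commute.mpr
              (Subgroup.mem_center_iff.mp hy' (π' x))
          exact (hker _).mp this
        calc H = ⁅H, H⁆ := (commutator_subgroup_eq_self H hperfH).symm
          _ ≤ R := hcomm_le
      -- normalClosure of n₀ in Q is N
      have hclN : Subgroup.normalClosure {(↑n₀ : Q)} = N := by
        apply le_antisymm
        · exact Subgroup.normalClosure_le_normal (Set.singleton_subset_iff.mpr hnN)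
        · have hcomapnorm : (Subgroup.comap N.subtype
              (Subgroup.normalClosure {(↑n₀ : Q)})).Normal :=
            Subgroup.Normal.comap Subgroup.normalClosure_normal N.subtype
          have h1 : (Subgroup.normalClosure {n₀} : Subgroup ↥N) ≤
              Subgroup.comap N.subtype (Subgroup.normalClosure {(↑n₀ : Q)}) :=
            Subgroup.normalClosure_le_normal (Set.singleton_subset_iff.mpr
              (Subgroup.mem_comap.mpr (Subgroup.subset_normalClosure rfl)))
          rw [hn₀] at h1
          intro x hx
          have := h1 (Subgroup.mem_top (⟨x, hx⟩ : ↥N))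
          rwa [Subgroup.mem_comap] at this
      -- N ≤ R
      have hmapN' : Subgroup.map π' N = Subgroup.normalClosure {π' ↑n₀} := by
        conv_lhs => rw [← hclN]
        rw [Subgroup.map_normalClosure _ _ (QuotientGroup.mk'_surjective R),
          Set.image_singleton]
      have hn_center : π' ↑n₀ ∈ Subgroup.center (Q ⧸ R) := by
        have : π' ↑n₀ = (π' g)⁻¹ := by rw [hgn, inv_inv]
        rw [this]
        exact inv_mem hc_center
      have hncl_centerN : Subgroup.normalClosure {π' ↑n₀} ≤ Subgroup.center (Q ⧸ R) :=
        Subgroup.normalClosure_le_normal (Set.singleton_subset_iff.mpr hn_center)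
      have hNR : N ≤ R := by
        have hcomm_le : ⁅N, N⁆ ≤ R := by
          rw [Subgroup.commutator_le]
          intro x hx y hy
          have hy' : π' y ∈ Subgroup.center (Q ⧸ R) :=
            hncl_centerN (hmapN' ▸ Subgroup.mem_map_of_mem π' hy)
          have : π' ⁅x, y⁆ = 1 := by
            rw [map_commutatorElement]
            exact commutatorElement_eq_one_iff_commute.mpr
              (Subgroup.mem_center_iff.mp hy' (π' x))
          exact (hker _).mp this
        calc N = ⁅N, N⁆ := (commutator_subgroup_eq_self N hperfN).symm
          _ ≤ R := hcomm_le
      exact ⟨w, top_unique (hsup ▸ sup_le hHR hNR)⟩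

theorem perfect_profinite_normally_generated
    {G : Type*} [Group G] [TopologicalSpace G] [IsTopologicalGroup G]
    [CompactSpace G] [T2Space G] [TotallyDisconnectedSpace G]
    (hperf : Dense ((commutator G : Subgroup G) : Set G)) :
    ∃ g : G, (Subgroup.normalClosure {g}).topologicalClosure = ⊤ := by
  classical
  set X : OpenNormalSubgroup G → Set G :=
    fun U => {g : G | U.toSubgroup ⊔ Subgroup.normalClosure {g} = ⊤} with hXdef
  have hXmem : ∀ (U : OpenNormalSubgroup G) (g : G),
      g ∈ X U ↔ U.toSubgroup ⊔ Subgroup.normalClosure {g} = ⊤ := fun U g => Iff.rfl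
  -- coset invariance
  have hcoset : ∀ (U : OpenNormalSubgroup G), ∀ g ∈ X U, ∀ u ∈ U.toSubgroup, g * u ∈ X U := by
    intro U g hg u hu
    rw [hXmem] at hg ⊢
    have hgmem : g ∈ U.toSubgroup ⊔ Subgroup.normalClosure {g * u} := by
      have h1 : g * u ∈ U.toSubgroup ⊔ Subgroup.normalClosure {g * u} :=
        Subgroup.mem_sup_right (Subgroup.subset_normalClosure rfl)
      have h2 : u ∈ U.toSubgroup ⊔ Subgroup.normalClosure {g * u} := Subgroup.mem_sup_left hu
      have := mul_mem h1 (inv_mem h2)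
      simpa using this
    have hle : Subgroup.normalClosure {g} ≤ U.toSubgroup ⊔ Subgroup.normalClosure {g * u} :=
      Subgroup.normalClosure_le_normal (Set.singleton_subset_iff.mpr hgmem)
    exact top_unique (hg ▸ sup_le le_sup_left hle)
  -- X U is closed
  have hclosed : ∀ U : OpenNormalSubgroup G, IsClosed (X U) := by
    intro U
    rw [← isOpen_compl_iff, isOpen_iff_mem_nhds]
    intro g hg
    rw [mem_nhds_iff]
    refine ⟨g • (U : Set G), ?_, U.toOpenSubgroup.isOpen.leftCoset g, ?_⟩
    · intro y hy
      obtain ⟨u, hu, rfl⟩ := hy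
      intro hyX
      apply hg
      have := hcoset U _ hyX u⁻¹ (inv_mem hu)
      simpa [smul_eq_mul, mul_assoc] using this
    · exact ⟨1, one_mem _, mul_one g⟩
  -- X U is nonempty
  have hne : ∀ U : OpenNormalSubgroup G, (X U).Nonempty := by
    intro U
    haveI : Finite (G ⧸ U.toSubgroup) := inferInstance
    set π := QuotientGroup.mk' U.toSubgroup with hπ
    have hsurj := QuotientGroup.mk'_surjective U.toSubgroup
    have hdense_map : Subgroup.map π (commutator G) = ⊤ := by
      rw [eq_top_iff']
      intro x
      obtain ⟨gg, rfl⟩ := hsurj x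
      have hone : (gg • (U : Set G)).Nonempty := ⟨gg, 1, one_mem _, mul_one gg⟩
      obtain ⟨c, hco, hcc⟩ := hperf.inter_open_nonempty (gg • (U : Set G))
        (U.toOpenSubgroup.isOpen.leftCoset gg) hone
      obtain ⟨u, hu, rfl⟩ := hco
      refine Subgroup.mem_map.mpr ⟨gg * u, hcc, ?_⟩
      exact ((QuotientGroup.mk'_eq_mk' U.toSubgroup).mpr ⟨u, hu, rfl⟩).symm
    have hperfQ : commutator (G ⧸ U.toSubgroup) = ⊤ := by
      calc commutator (G ⧸ U.toSubgroup) = ⁅Subgroup.map π ⊤, Subgroup.map π ⊤⁆ := by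
            rw [Subgroup.map_top_of_surjective π hsurj, _root_.commutator_def]
        _ = Subgroup.map π ⁅(⊤ : Subgroup G), ⊤⁆ := (Subgroup.map_commutator ⊤ ⊤ π).symm
        _ = ⊤ := by rw [← _root_.commutator_def, hdense_map]
    obtain ⟨q, hq⟩ := exists_normalClosure_eq_top (Nat.card (G ⧸ U.toSubgroup))
      (G ⧸ U.toSubgroup) le_rfl hperfQ
    obtain ⟨g, rfl⟩ := hsurj q
    refine ⟨g, ?_⟩
    rw [hXmem]
    have hmap : Subgroup.map π (Subgroup.normalClosure {g}) = ⊤ := by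
      rw [Subgroup.map_normalClosure _ _ hsurj, Set.image_singleton, hq]
    have h1 : Subgroup.map π (U.toSubgroup ⊔ Subgroup.normalClosure {g}) = ⊤ :=
      top_unique (by rw [← hmap]; exact Subgroup.map_mono le_sup_right)
    have h2 : Subgroup.comap π (Subgroup.map π (U.toSubgroup ⊔ Subgroup.normalClosure {g})) =
        U.toSubgroup ⊔ Subgroup.normalClosure {g} := by
      rw [Subgroup.comap_map_eq, QuotientGroup.ker_mk', sup_comm U.toSubgroup, sup_assoc, sup_idem]
    rw [h1, Subgroup.comap_top] at h2
    exact h2.symm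
  -- directedness
  have hdir : Directed (· ⊇ ·) X := by
    intro U V
    refine ⟨U ⊓ V, ?_, ?_⟩
    · intro g hg
      rw [hXmem] at hg ⊢
      have hle : (U ⊓ V).toSubgroup ≤ U.toSubgroup := fun x hx => hx.1
      exact top_unique (hg ▸ sup_le_sup_right hle _)
    · intro g hg
      rw [hXmem] at hg ⊢
      have hle : (U ⊓ V).toSubgroup ≤ V.toSubgroup := fun x hx => hx.2
      exact top_unique (hg ▸ sup_le_sup_right hle _)
  haveI : Nonempty (OpenNormalSubgroup G) :=
    ⟨{ toOpenSubgroup := ⊤, isNormal' := inferInstanceAs (⊤ : Subgroup G).Normal }⟩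
  obtain ⟨g, hg⟩ := IsCompact.nonempty_iInter_of_directed_nonempty_isCompact_isClosed X hdir hne
    (fun U => (hclosed U).isCompact) hclosed
  refine ⟨g, ?_⟩
  have hdense : Dense ((Subgroup.normalClosure {g} : Subgroup G) : Set G) := by
    rw [dense_iff_inter_open]
    intro O hO ⟨x, hx⟩
    -- find an open normal subgroup U with x • U ⊆ O
    have hopen : IsOpen (x⁻¹ • O) := hO.smul x⁻¹
    have h1mem : (1 : G) ∈ x⁻¹ • O := ⟨x, hx, inv_mul_cancel x⟩
    obtain ⟨W, hWclopen, hW1, hWsub⟩ := compact_exists_isClopen_in_isOpen hopen h1mem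
    obtain ⟨U, hU⟩ := IsTopologicalGroup.exist_openNormalSubgroup_sub_clopen_nhds_of_one hWclopen hW1
    have hXg : g ∈ X U := Set.mem_iInter.mp hg U
    rw [hXmem] at hXg
    rw [sup_comm] at hXg
    have hx' : x ∈ ((Subgroup.normalClosure {g} : Subgroup G) : Set G) * (U.toSubgroup : Set G) := by
      rw [← Subgroup.mul_normal _ U.toSubgroup, hXg]
      exact Subgroup.mem_top x
    obtain ⟨k, hk, u, hu, hxe⟩ := hx'
    refine ⟨k, ?_, hk⟩
    have hkO : k = x * u⁻¹ := by rw [← hxe]; group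
    have : u⁻¹ ∈ x⁻¹ • O := hWsub (hU (inv_mem hu))
    obtain ⟨o, ho, hoe⟩ := this
    have hoe' : x⁻¹ * o = u⁻¹ := hoe
    have : o = x * u⁻¹ := by rw [← hoe']; group
    rw [hkO, ← this]
    exact ho
  apply SetLike.ext'
  rw [Subgroup.topologicalClosure_coe, hdense.closure_eq, Subgroup.coe_top]
end

section
/- Let G be a perfect topological group (its commutator subgroup is dense) and N a closed normal soluble subgroup of G. If G/N is topologically normally generated by a single element, then so is G. -/
open scoped commutatorElement

/-- Commutator of topological closures is contained in the closure of the commutator. -/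
lemma aux_commutator_closure_le {G : Type*} [Group G] [TopologicalSpace G] [IsTopologicalGroup G]
    (H K : Subgroup G) :
    ⁅H.topologicalClosure, K.topologicalClosure⁆ ≤ ⁅H, K⁆.topologicalClosure := by
  rw [Subgroup.commutator_le]
  intro p hp q hq
  have hcont : Continuous (Function.uncurry fun x y : G => ⁅x, y⁆) := by
    simp only [Function.uncurry, commutatorElement_def]
    fun_prop
  have h1 : p ∈ _root_.closure (H : Set G) := hp
  have h2 : q ∈ _root_.closure (K : Set G) := hq
  have : ⁅p, q⁆ ∈ _root_.closure ((⁅H, K⁆ : Subgroup G) : Set G) :=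
    map_mem_closure₂ hcont h1 h2 fun a ha b hb => Subgroup.commutator_mem_commutator ha hb
  exact this

theorem normally_generated_of_quotient_by_solvable
    {G : Type*} [Group G] [TopologicalSpace G] [IsTopologicalGroup G]
    (hperf : Dense ((commutator G : Subgroup G) : Set G))
    (N : Subgroup G) [N.Normal] (hNc : IsClosed (N : Set G)) (hNsol : Group.IsSolvable N)
    (hq : ∃ x : G ⧸ N, (Subgroup.normalClosure {x}).topologicalClosure = ⊤) :
    ∃ g : G, (Subgroup.normalClosure {g}).topologicalClosure = ⊤ := by
  obtain ⟨x, hx⟩ := hq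
  obtain ⟨g, rfl⟩ := QuotientGroup.mk_surjective x
  refine ⟨g, ?_⟩
  set H : Subgroup G := (Subgroup.normalClosure {g}).topologicalClosure with hH
  haveI : H.Normal := Subgroup.is_normal_topologicalClosure _
  haveI hHc : IsClosed (H : Set G) := Subgroup.isClosed_topologicalClosure _
  set Q := G ⧸ H with hQ
  set q : G →* Q := QuotientGroup.mk' H with hqdef
  have hqsurj : Function.Surjective q := QuotientGroup.mk'_surjective H
  have hqcont : Continuous q := continuous_quotient_mk'
  -- the image of N in Q is dense
  have hDdense : Dense (⇑q '' (N : Set G)) := by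
    rw [dense_iff_inter_open]
    rintro U hU ⟨z0, hz0⟩
    obtain ⟨u0, rfl⟩ := hqsurj z0
    set W : Set (G ⧸ N) := ((↑) : G → G ⧸ N) '' (⇑q ⁻¹' U) with hW
    have hWopen : IsOpen W := QuotientGroup.isOpenMap_coe _ (hU.preimage hqcont)
    have hWne : W.Nonempty := ⟨(u0 : G ⧸ N), u0, hz0, rfl⟩
    have hdense2 : Dense (((↑) : G → G ⧸ N) '' (Subgroup.normalClosure {g} : Set G)) := by
      have hmap : (Subgroup.normalClosure {g}).map (QuotientGroup.mk' N)
          = Subgroup.normalClosure {(g : G ⧸ N)} := by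
        rw [Subgroup.map_normalClosure _ _ (QuotientGroup.mk'_surjective N)]
        simp
      have hd : Dense ((Subgroup.normalClosure {(g : G ⧸ N)}) : Set (G ⧸ N)) := by
        rw [dense_iff_closure_eq, ← Subgroup.topologicalClosure_coe, hx, Subgroup.coe_top]
      rw [← hmap] at hd
      simpa using hd
    obtain ⟨w, hwW, a, ha, haw⟩ := dense_iff_inter_open.mp hdense2 W hWopen hWne
    obtain ⟨u, hu, huw⟩ := hwW
    have huaN : u⁻¹ * a ∈ N := by
      rw [← QuotientGroup.eq]
      exact (huw.trans haw.symm)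
    have hqa : q a = 1 := (QuotientGroup.eq_one_iff a).mpr
      (Subgroup.le_topologicalClosure _ ha)
    refine ⟨q u, hu, (u⁻¹ * a)⁻¹, N.inv_mem huaN, ?_⟩
    rw [mul_inv_rev, inv_inv, map_mul, map_inv, hqa]
    simp
  -- Q is perfect
  have hQperf : (commutator Q).topologicalClosure = ⊤ := by
    have h1 : ⇑q '' (commutator G : Set G) ⊆ ((commutator Q : Subgroup Q) : Set Q) := by
      rintro _ ⟨a, ha, rfl⟩
      have hle : (commutator G).map q ≤ commutator Q := by
        rw [commutator_def, Subgroup.map_commutator, commutator_def Q]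
        exact Subgroup.commutator_mono le_top le_top
      exact hle (Subgroup.mem_map_of_mem q ha)
    have h2 : Dense (⇑q '' (commutator G : Set G)) :=
      (hqsurj.denseRange).dense_image hqcont hperf
    rw [Subgroup.eq_top_iff']
    intro z
    rw [← SetLike.mem_coe, Subgroup.topologicalClosure_coe]
    exact closure_mono h1 (h2 z)
  -- derived series of Q is dense at every stage
  have hder : ∀ n, (derivedSeries Q n).topologicalClosure = ⊤ := by
    intro n
    induction n with
    | zero =>
      rw [derivedSeries_zero, eq_top_iff]
      exact Subgroup.le_topologicalClosure _
    | succ n ih =>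
      have h1 : commutator Q ≤ (derivedSeries Q (n + 1)).topologicalClosure := by
        rw [commutator_def, derivedSeries_succ]
        calc ⁅(⊤ : Subgroup Q), (⊤ : Subgroup Q)⁆
            = ⁅(derivedSeries Q n).topologicalClosure,
                (derivedSeries Q n).topologicalClosure⁆ := by rw [ih]
          _ ≤ _ := aux_commutator_closure_le _ _
      rw [eq_top_iff, ← hQperf]
      exact Subgroup.topologicalClosure_minimal _ h1 (Subgroup.isClosed_topologicalClosure _)
  -- D = image of N in Q, solvable and dense
  haveI hDsol : Group.IsSolvable (N.map q) := solvable_of_surjective (q.subgroupMap_surjective N)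
  have hDcl : (N.map q).topologicalClosure = ⊤ := by
    rw [Subgroup.eq_top_iff']
    intro z
    rw [← SetLike.mem_coe, Subgroup.topologicalClosure_coe, Subgroup.coe_map]
    exact hDdense z
  obtain ⟨m, hm⟩ := hDsol.solvable
  have hbound : ∀ n, derivedSeries Q n ≤
      ((derivedSeries (N.map q) n).map (N.map q).subtype).topologicalClosure := by
    intro n
    induction n with
    | zero =>
      rw [derivedSeries_zero, derivedSeries_zero, ← MonoidHom.range_eq_map,
        Subgroup.range_subtype]
      exact hDcl.ge
    | succ n ih =>
      rw [derivedSeries_succ, derivedSeries_succ, Subgroup.map_commutator]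
      calc ⁅derivedSeries Q n, derivedSeries Q n⁆
          ≤ ⁅((derivedSeries (N.map q) n).map (N.map q).subtype).topologicalClosure,
              ((derivedSeries (N.map q) n).map (N.map q).subtype).topologicalClosure⁆ :=
            Subgroup.commutator_mono ih ih
        _ ≤ _ := aux_commutator_closure_le _ _
  have hbotclosed : IsClosed (((⊥ : Subgroup Q) : Set Q)) := by
    rw [(Subgroup.coe_bot : ((⊥ : Subgroup Q) : Set Q) = {1})]
    exact isClosed_singleton
  have hQbot : derivedSeries Q m ≤ ⊥ := by
    have hb := hbound m
    rw [hm, Subgroup.map_bot] at hb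
    exact le_trans hb (Subgroup.topologicalClosure_minimal _ le_rfl hbotclosed)
  have htriv : (⊥ : Subgroup Q) = ⊤ := by
    rw [eq_top_iff, ← hder m]
    exact Subgroup.topologicalClosure_minimal _ hQbot hbotclosed
  rw [Subgroup.eq_top_iff' H]
  intro a
  have h1 : (QuotientGroup.mk a : Q) ∈ (⊥ : Subgroup Q) := htriv ▸ Subgroup.mem_top _
  rw [Subgroup.mem_bot] at h1
  exact (QuotientGroup.eq_one_iff a).mp h1
end

section
/- Let H = ∏_{i∈I} S_i be a direct product of non-abelian topologically simple topological groups, with the product topology. Then every closed normal subgroup of H is of the form ∏_{i∈J} S_i for some subset J ⊆ I. -/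
theorem closed_normal_subgroup_of_product_of_simple
    {ι : Type*} {S : ι → Type*} [∀ i, Group (S i)] [∀ i, TopologicalSpace (S i)]
    [∀ i, IsTopologicalGroup (S i)] [∀ i, T2Space (S i)]
    (hsimple : ∀ i (N : Subgroup (S i)), N.Normal → IsClosed (N : Set (S i)) →
      N = ⊥ ∨ N = ⊤)
    (hnonab : ∀ i, ∃ a b : S i, a * b ≠ b * a)
    (N : Subgroup (∀ i, S i)) (hN : N.Normal) (hNc : IsClosed (N : Set (∀ i, S i))) :
    ∃ J : Set ι, N = Subgroup.pi Jᶜ (fun _ => ⊥) := by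
  classical
  -- center of each factor is trivial
  have hcenter : ∀ i, Subgroup.center (S i) = ⊥ := by
    intro i
    have hclosed : IsClosed (Subgroup.center (S i) : Set (S i)) := by
      have : (Subgroup.center (S i) : Set (S i)) = ⋂ g : S i, {z | g * z = z * g} := by
        ext z
        simp [Subgroup.mem_center_iff, Set.mem_iInter]
      rw [this]
      exact isClosed_iInter fun g =>
        isClosed_eq (continuous_const.mul continuous_id) (continuous_id.mul continuous_const)
    rcases hsimple i _ inferInstance hclosed with h | h
    · exact h
    · exfalso
      obtain ⟨a, b, hab⟩ := hnonab i
      have : a ∈ Subgroup.center (S i) := h ▸ Subgroup.mem_top a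
      exact hab ((Subgroup.mem_center_iff.mp this b).symm)
  set J : Set ι := {i | ∃ x ∈ N, x i ≠ 1} with hJ
  -- key: for i ∈ J, every single element lies in N
  have hkey : ∀ i ∈ J, ∀ s : S i, Pi.mulSingle i s ∈ N := by
    intro i hi s
    obtain ⟨x, hxN, hxi⟩ := hi
    set K : Subgroup (S i) := N.comap (MonoidHom.mulSingle S i) with hK
    have hKnormal : K.Normal := Subgroup.Normal.comap hN _
    have hKclosed : IsClosed (K : Set (S i)) := by
      have : (K : Set (S i)) = (Pi.mulSingle i) ⁻¹' (N : Set (∀ i, S i)) := rfl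
      rw [this]
      exact hNc.preimage (continuous_mulSingle i)
    have hKne : K ≠ ⊥ := by
      -- x i is not central
      have hx_not_center : x i ∉ Subgroup.center (S i) := by
        rw [hcenter i]; simpa using hxi
      rw [Subgroup.mem_center_iff] at hx_not_center
      push_neg at hx_not_center
      obtain ⟨a, ha⟩ := hx_not_center
      intro hbot
      -- the commutator [mulSingle i a, x] is in N and is mulSingle of a nontrivial elt
      have hcomm : Pi.mulSingle i a * x * (Pi.mulSingle i a)⁻¹ * x⁻¹ ∈ N := by
        have h1 : Pi.mulSingle i a * x * (Pi.mulSingle i a)⁻¹ ∈ N :=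
          hN.conj_mem x hxN (Pi.mulSingle i a)
        exact N.mul_mem h1 (N.inv_mem hxN)
      have heq : Pi.mulSingle i a * x * (Pi.mulSingle i a)⁻¹ * x⁻¹ =
          Pi.mulSingle i (a * x i * a⁻¹ * (x i)⁻¹) := by
        funext j
        by_cases hj : j = i
        · subst hj; simp [Pi.mulSingle_apply]
        · simp [Pi.mulSingle_apply, hj]
      have hmem : a * x i * a⁻¹ * (x i)⁻¹ ∈ K := by
        rw [hK, Subgroup.mem_comap]
        show Pi.mulSingle i (a * x i * a⁻¹ * (x i)⁻¹) ∈ N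
        rw [← heq]; exact hcomm
      rw [hbot, Subgroup.mem_bot] at hmem
      apply ha
      calc a * x i = (a * x i * a⁻¹ * (x i)⁻¹) * (x i * a) := by group
        _ = x i * a := by rw [hmem]; group
    have hKtop : K = ⊤ := (hsimple i K hKnormal hKclosed).resolve_left hKne
    have : s ∈ K := hKtop ▸ Subgroup.mem_top s
    exact this
  refine ⟨J, le_antisymm ?_ ?_⟩
  · intro x hx
    rw [Subgroup.mem_pi]
    intro i hi
    rw [Subgroup.mem_bot]
    by_contra hne
    exact hi ⟨x, hx, hne⟩
  · intro x hx
    rw [Subgroup.mem_pi] at hx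
    -- approximate x by finitely supported products
    have hsingle : ∀ i, Pi.mulSingle i (x i) ∈ N := by
      intro i
      by_cases hiJ : i ∈ J
      · exact hkey i hiJ (x i)
      · have : x i = 1 := by
          have := hx i hiJ
          rwa [Subgroup.mem_bot] at this
        rw [this, Pi.mulSingle_one]
        exact N.one_mem
    have hmem : ∀ F : Finset ι, (fun j => if j ∈ F then x j else 1) ∈ N := by
      intro F
      induction F using Finset.induction_on with
      | empty => convert N.one_mem using 1; funext j; simp
      | @insert a F ha ih =>
        have heq : (fun j => if j ∈ insert a F then x j else 1) =
            Pi.mulSingle a (x a) * (fun j => if j ∈ F then x j else 1) := by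
          funext j
          by_cases hj : j = a
          · subst hj
            simp [Pi.mulSingle_apply, ha]
          · simp [Pi.mulSingle_apply, hj, Finset.mem_insert]
        rw [heq]
        exact N.mul_mem (hsingle a) ih
    -- tendsto
    have htend : Filter.Tendsto (fun F : Finset ι => (fun j => if j ∈ F then x j else 1))
        Filter.atTop (nhds x) := by
      rw [tendsto_pi_nhds]
      intro i
      have : ∀ᶠ F : Finset ι in Filter.atTop, (if i ∈ F then x i else 1) = x i := by
        filter_upwards [Filter.eventually_ge_atTop ({i} : Finset ι)] with F hF
        rw [if_pos (hF (Finset.mem_singleton_self i))]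
      exact Filter.Tendsto.congr' (this.mono fun F hF => hF.symm) tendsto_const_nhds
    have : x ∈ closure (N : Set (∀ i, S i)) :=
      mem_closure_of_tendsto htend (Filter.Eventually.of_forall hmem)
    rwa [hNc.closure_eq] at this
end

section
/- Let H = ∏_{i∈I} S_i be a product of non-abelian topologically simple topological groups and let h ∈ H have non-trivial component in every coordinate. Then H is topologically normally generated by h: the smallest closed normal subgroup of H containing h is H itself. -/
theorem product_of_simple_normally_generated
    {ι : Type*} {S : ι → Type*} [∀ i, Group (S i)] [∀ i, TopologicalSpace (S i)]
    [∀ i, IsTopologicalGroup (S i)] [∀ i, T2Space (S i)]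
    (hsimple : ∀ i (N : Subgroup (S i)), N.Normal → IsClosed (N : Set (S i)) →
      N = ⊥ ∨ N = ⊤)
    (hnonab : ∀ i, ∃ a b : S i, a * b ≠ b * a)
    (h : ∀ i, S i) (hh : ∀ i, h i ≠ 1) :
    (Subgroup.normalClosure {h}).topologicalClosure = ⊤ := by
  classical
  set N := (Subgroup.normalClosure {h}).topologicalClosure with hN
  have hNnormal : N.Normal := Subgroup.is_normal_topologicalClosure _
  have hNclosed : IsClosed (N : Set (∀ i, S i)) :=
    Subgroup.isClosed_topologicalClosure _
  have hhN : h ∈ N :=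
    Subgroup.le_topologicalClosure _ (Subgroup.subset_normalClosure rfl)
  -- every one-coordinate element is in N
  have hsingle : ∀ i (s : S i), Pi.mulSingle i s ∈ N := by
    intro i
    set K : Subgroup (S i) := N.comap (MonoidHom.mulSingle S i) with hK
    have hKnormal : K.Normal := by
      constructor
      intro s hs t
      have : (MonoidHom.mulSingle S i) (t * s * t⁻¹) ∈ N := by
        rw [map_mul, map_mul, map_inv]
        exact Subgroup.Normal.conj_mem hNnormal _ hs _
      exact this
    have hKclosed : IsClosed (K : Set (S i)) := by
      have : Continuous (MonoidHom.mulSingle S i) := continuous_mulSingle i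
      exact hNclosed.preimage this
    have hcomm : ∀ x : S i, x * h i * x⁻¹ * (h i)⁻¹ ∈ K := by
      intro x
      have hg : Pi.mulSingle i x * h * (Pi.mulSingle i x)⁻¹ * h⁻¹ ∈
          Subgroup.normalClosure ({h} : Set (∀ i, S i)) := by
        have h1 : h ∈ Subgroup.normalClosure ({h} : Set (∀ i, S i)) :=
          Subgroup.subset_normalClosure rfl
        exact mul_mem (Subgroup.Normal.conj_mem (Subgroup.normalClosure_normal) _ h1 _)
          (inv_mem h1)
      have hgN : Pi.mulSingle i x * h * (Pi.mulSingle i x)⁻¹ * h⁻¹ ∈ N :=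
        Subgroup.le_topologicalClosure _ hg
      have key : (MonoidHom.mulSingle S i) (x * h i * x⁻¹ * (h i)⁻¹) =
          Pi.mulSingle i x * h * (Pi.mulSingle i x)⁻¹ * h⁻¹ := by
        funext j
        by_cases hj : j = i
        · subst hj; simp
        · simp [Pi.mulSingle_apply, hj]
      show (MonoidHom.mulSingle S i) _ ∈ N
      rw [key]; exact hgN
    rcases hsimple i K hKnormal hKclosed with hbot | htop
    · exfalso
      have hcenter : h i ∈ Subgroup.center (S i) := by
        rw [Subgroup.mem_center_iff]
        intro x
        have h0 := hcomm x
        rw [hbot, Subgroup.mem_bot] at h0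
        have h1 : x * h i * x⁻¹ = h i := by
          have := mul_inv_eq_one.mp h0
          simpa using this
        calc x * h i = x * h i * x⁻¹ * x := by group
          _ = h i * x := by rw [h1]
      have hcc : IsClosed ((Subgroup.center (S i)) : Set (S i)) := by
        have : ((Subgroup.center (S i)) : Set (S i)) =
            ⋂ x : S i, {g : S i | g * x = x * g} := by
          ext g
          simp [Subgroup.mem_center_iff, Set.mem_iInter, eq_comm]
        rw [this]
        exact isClosed_iInter fun x =>
          isClosed_eq (continuous_id.mul continuous_const)
            (continuous_const.mul continuous_id)
      rcases hsimple i (Subgroup.center (S i)) (by infer_instance) hcc with hcb | hct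
      · exact hh i (by rwa [hcb, Subgroup.mem_bot] at hcenter)
      · obtain ⟨a, b, hab⟩ := hnonab i
        have ha : a ∈ Subgroup.center (S i) := by rw [hct]; trivial
        exact hab ((Subgroup.mem_center_iff.mp ha) b).symm
    · intro s
      have : s ∈ K := by rw [htop]; trivial
      exact this
  -- finitely supported elements are in N
  have hfin : ∀ (F : Finset ι) (x : ∀ i, S i),
      (fun i => if i ∈ F then x i else 1) ∈ N := by
    intro F
    induction F using Finset.induction with
    | empty => intro x; convert N.one_mem using 1; funext i; simp
    | @insert a F ha ih =>
      intro x
      have heq : (fun i => if i ∈ insert a F then x i else 1) =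
          Pi.mulSingle a (x a) * (fun i => if i ∈ F then x i else 1) := by
        funext j
        by_cases hj : j = a
        · subst hj
          simp [Pi.mulSingle_apply, ha]
        · simp [Pi.mulSingle_apply, hj, Finset.mem_insert]
      rw [heq]
      exact mul_mem (hsingle a (x a)) (ih x)
  -- density
  rw [eq_top_iff]
  intro x _
  have : x ∈ closure (N : Set (∀ i, S i)) := by
    rw [mem_closure_iff_nhds]
    intro t ht
    rw [nhds_pi, Filter.mem_pi] at ht
    obtain ⟨I, hI, u, hu, hsub⟩ := ht
    refine ⟨fun i => if i ∈ hI.toFinset then x i else 1, ?_, hfin _ x⟩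
    apply hsub
    intro i hi
    have hm : i ∈ hI.toFinset := hI.mem_toFinset.mpr hi
    show (if i ∈ hI.toFinset then x i else 1) ∈ u i
    rw [if_pos hm]
    exact mem_of_mem_nhds (hu i)
  rwa [hNclosed.closure_eq] at this
end

section
/- Let G be a perfect topological group and H a closed normal subgroup of G which is a topological direct product of topologically simple topological groups. If G/H is topologically normally generated by a single element, then so is G. -/
open scoped Pointwise
open scoped commutatorElement

private lemma comm_mem_left' {G : Type*} [Group G] {A : Subgroup G} (hA : A.Normal) {a : G}
    (ha : a ∈ A) (b : G) : ⁅a, b⁆ ∈ A := by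
  have h1 : b * a⁻¹ * b⁻¹ ∈ A := hA.conj_mem _ (A.inv_mem ha) b
  have h2 := A.mul_mem ha h1
  simpa [commutatorElement_def, mul_assoc] using h2

private lemma comm_mem_right' {G : Type*} [Group G] {A : Subgroup G} (hA : A.Normal) {a : G}
    (ha : a ∈ A) (b : G) : ⁅b, a⁆ ∈ A := by
  have h1 : b * a * b⁻¹ ∈ A := hA.conj_mem _ ha b
  have h2 := A.mul_mem h1 (A.inv_mem ha)
  simpa [commutatorElement_def, mul_assoc] using h2

private lemma center_isClosed' {K : Type*} [Group K] [TopologicalSpace K] [IsTopologicalGroup K]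
    [T2Space K] : IsClosed ((Subgroup.center K : Subgroup K) : Set K) := by
  have h : ((Subgroup.center K : Subgroup K) : Set K) = ⋂ t : K, {z : K | t * z = z * t} := by
    ext z
    simp [Subgroup.mem_center_iff, Set.mem_iInter]
  rw [h]
  exact isClosed_iInter fun t =>
    isClosed_eq (continuous_const.mul continuous_id) (continuous_id.mul continuous_const)

theorem normally_generated_of_quotient_by_product_of_simple
    {G : Type*} [Group G] [TopologicalSpace G] [IsTopologicalGroup G] [T2Space G]
    (hperf : Dense ((commutator G : Subgroup G) : Set G))
    (H : Subgroup G) [H.Normal] (hHc : IsClosed (H : Set G))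
    {ι : Type*} {S : ι → Type*} [∀ i, Group (S i)] [∀ i, TopologicalSpace (S i)]
    [∀ i, IsTopologicalGroup (S i)] [∀ i, T2Space (S i)]
    (hsimple : ∀ i (N : Subgroup (S i)), N.Normal → IsClosed (N : Set (S i)) →
      N = ⊥ ∨ N = ⊤)
    (φ : (∀ i, S i) ≃* H) (hφ : Continuous φ) (hφ' : Continuous φ.symm)
    (hq : ∃ x : G ⧸ H, (Subgroup.normalClosure {x}).topologicalClosure = ⊤) :
    ∃ g : G, (Subgroup.normalClosure {g}).topologicalClosure = ⊤ := by
  classical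
  obtain ⟨x, hx⟩ := hq
  obtain ⟨g, rfl⟩ := QuotientGroup.mk_surjective x
  set ψ : (∀ i, S i) →* G := H.subtype.comp φ.toMonoidHom with hψdef
  have hψmem : ∀ p, ψ p ∈ H := fun p => (φ p).2
  have hψcont : Continuous ψ := continuous_subtype_val.comp hφ
  have hψsymm : ∀ (a : G) (ha : a ∈ H), ψ (φ.symm ⟨a, ha⟩) = a := by
    intro a ha
    simp [hψdef]
  have hconj : ∀ a : G, a ∈ H → ∀ b : G, b * a * b⁻¹ ∈ H := fun a ha b =>
    ‹H.Normal›.conj_mem a ha b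
  set θ : ∀ i, S i → S i := fun i s =>
    (φ.symm ⟨g * ψ (Pi.mulSingle i s) * g⁻¹, hconj _ (hψmem _) g⟩) i with hθdef
  -- choose the correcting element coordinatewise
  have hc : ∀ i, ∃ c : S i, (∀ a b : S i, a * b = b * a) ∨ ∃ s, θ i s ≠ c⁻¹ * s * c := by
    intro i
    by_cases hab : ∀ a b : S i, a * b = b * a
    · exact ⟨1, Or.inl hab⟩
    · by_contra hcon
      push_neg at hcon
      apply hab
      have hall : ∀ c s : S i, θ i s = c⁻¹ * s * c := fun c s => (hcon c).2 s
      intro a b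
      have h1 : b⁻¹ * a * b = a := by rw [← hall b a, hall 1 a]; group
      calc a * b = b * (b⁻¹ * a * b) := by group
        _ = b * a := by rw [h1]
  choose c hcspec using hc
  set m : G := g * ψ c with hmdef
  set M : Subgroup G := (Subgroup.normalClosure {m}).topologicalClosure with hMdef
  haveI hMnormal : M.Normal := Subgroup.is_normal_topologicalClosure _
  have hMclosed : IsClosed (M : Set G) := Subgroup.isClosed_topologicalClosure _
  have hmM : m ∈ M :=
    Subgroup.le_topologicalClosure _ (Subgroup.subset_normalClosure (Set.mem_singleton m))
  refine ⟨m, ?_⟩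
  rw [← hMdef]
  -- Step 1: single-coordinate commutators lie in M
  have key : ∀ i (s t : S i), ψ (Pi.mulSingle i ⁅s, t⁆) ∈ M := by
    intro i
    set T : Subgroup (S i) := Subgroup.comap (ψ.comp (MonoidHom.mulSingle S i)) M with hTdef
    have hTnormal : T.Normal := Subgroup.Normal.comap hMnormal _
    have hTclosed : IsClosed (T : Set (S i)) := by
      have h : (T : Set (S i)) = (fun s => ψ (Pi.mulSingle i s)) ⁻¹' (M : Set G) := rfl
      rw [h]
      exact hMclosed.preimage (hψcont.comp (continuous_mulSingle i))
    rcases hsimple i T hTnormal hTclosed with hT | hT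
    · rcases hsimple i (Subgroup.center (S i)) inferInstance center_isClosed'
        with hZ | hZ
      · rcases hcspec i with hab | ⟨s₀, hs₀⟩
        · intro s t
          have h1 : ⁅s, t⁆ = 1 := commutatorElement_eq_one_iff_mul_comm.2 (hab s t)
          rw [h1]
          simpa using M.one_mem
        · exfalso
          set s : S i := (c i)⁻¹ * s₀ * (c i) with hsdef
          set s' : S i := c i * s * (c i)⁻¹ with hs'def
          have hs'eq : s' = s₀ := by rw [hs'def, hsdef]; group
          set u : ∀ j, S j := Pi.mulSingle i s with hudef
          have hAmem : g * ψ (Pi.mulSingle i s') * g⁻¹ ∈ H := hconj _ (hψmem _) g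
          set w : ∀ j, S j := φ.symm ⟨g * ψ (Pi.mulSingle i s') * g⁻¹, hAmem⟩ with hwdef
          set q : ∀ j, S j := w * u⁻¹ with hqdef
          have hconj_single : ψ c * ψ u * (ψ c)⁻¹ = ψ (Pi.mulSingle i s') := by
            rw [← map_inv, ← map_mul, ← map_mul]
            congr 1
            funext j
            by_cases hj : j = i
            · subst hj
              simp [hudef, hs'def, Pi.mulSingle_eq_same]
            · simp [hudef, Pi.mulSingle_eq_of_ne hj]
          have hk_eq : ⁅m, ψ u⁆ = ψ q := by
            have h1 : ψ w = g * ψ (Pi.mulSingle i s') * g⁻¹ := hψsymm _ _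
            rw [hqdef, map_mul, map_inv, h1, commutatorElement_def, hmdef, ← hconj_single]
            group
          have hkM : ψ q ∈ M := by
            rw [← hk_eq]; exact comm_mem_left' hMnormal hmM _
          have hqcentral : q i ∈ Subgroup.center (S i) := by
            rw [Subgroup.mem_center_iff]
            intro t
            have h2 : ⁅ψ q, ψ (Pi.mulSingle i t)⁆ ∈ M := comm_mem_left' hMnormal hkM _
            have h3 : ⁅ψ q, ψ (Pi.mulSingle i t)⁆ = ψ (Pi.mulSingle i ⁅q i, t⁆) := by
              rw [← map_commutatorElement]
              congr 1
              funext j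
              by_cases hj : j = i
              · subst hj
                simp [commutatorElement_def, Pi.mulSingle_eq_same]
              · simp [commutatorElement_def, Pi.mulSingle_eq_of_ne hj]
            rw [h3] at h2
            have h4 : ⁅q i, t⁆ ∈ T := h2
            rw [hT] at h4
            have h5 : ⁅q i, t⁆ = 1 := Subgroup.mem_bot.1 h4
            exact (commutatorElement_eq_one_iff_mul_comm.1 h5).symm
          rw [hZ] at hqcentral
          have hq1 : q i = 1 := Subgroup.mem_bot.1 hqcentral
          have hqi : q i = θ i s' * s⁻¹ := by
            have hwi : w i = θ i s' := by rw [hθdef]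
            calc q i = w i * (u i)⁻¹ := rfl
              _ = θ i s' * s⁻¹ := by rw [hwi, hudef, Pi.mulSingle_eq_same]
          rw [hqi] at hq1
          have hfinal : θ i s' = s := by rwa [mul_inv_eq_one] at hq1
          rw [hs'eq] at hfinal
          exact hs₀ hfinal
      · intro s t
        have hab : ∀ a b : S i, a * b = b * a := by
          intro a b
          have hb : b ∈ Subgroup.center (S i) := by rw [hZ]; trivial
          exact Subgroup.mem_center_iff.1 hb a
        have h1 : ⁅s, t⁆ = 1 := commutatorElement_eq_one_iff_mul_comm.2 (hab s t)
        rw [h1]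
        simpa using M.one_mem
    · intro s t
      have hmem : ⁅s, t⁆ ∈ T := by rw [hT]; trivial
      exact hmem
  -- Step 2: all commutators of elements of H lie in M
  have hcommH : ∀ p r : ∀ i, S i, ψ ⁅p, r⁆ ∈ M := by
    intro p r
    have hd : ∀ j, ⁅p, r⁆ j = ⁅p j, r j⁆ := fun j => rfl
    have hfin : ∀ Fs : Finset ι, ψ (fun j => if j ∈ Fs then ⁅p, r⁆ j else 1) ∈ M := by
      intro Fs
      induction Fs using Finset.induction_on with
      | empty =>
        have h1 : (fun j => if j ∈ (∅ : Finset ι) then ⁅p, r⁆ j else 1)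
            = (1 : ∀ j, S j) := by funext j; simp
        rw [h1, map_one]; exact M.one_mem
      | @insert a Fs ha ih =>
        have hsplit : (fun j => if j ∈ insert a Fs then ⁅p, r⁆ j else 1)
            = Pi.mulSingle a (⁅p, r⁆ a) * (fun j => if j ∈ Fs then ⁅p, r⁆ j else 1) := by
          funext j
          by_cases hj : j = a
          · subst hj
            simp [Pi.mulSingle_eq_same, ha]
          · simp [Pi.mulSingle_eq_of_ne hj, Finset.mem_insert, hj]
        rw [hsplit, map_mul]
        exact M.mul_mem (key a (p a) (r a)) ih
    have htend : Filter.Tendsto (fun Fs : Finset ι => ψ (fun j => if j ∈ Fs then ⁅p, r⁆ j else 1))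
        Filter.atTop (nhds (ψ ⁅p, r⁆)) := by
      have h1 : Filter.Tendsto (fun Fs : Finset ι => (fun j => if j ∈ Fs then ⁅p, r⁆ j else 1))
          Filter.atTop (nhds ⁅p, r⁆) := by
        rw [tendsto_pi_nhds]
        intro j
        apply Filter.Tendsto.congr' _ tendsto_const_nhds
        filter_upwards [Filter.eventually_ge_atTop ({j} : Finset ι)] with Fs hFs
        have hj : j ∈ Fs := hFs (Finset.mem_singleton_self j)
        simp [hj]
      exact (hψcont.tendsto _).comp h1
    exact hMclosed.mem_of_tendsto htend (Filter.Eventually.of_forall hfin)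
  have hcommHG : ∀ a ∈ H, ∀ b ∈ H, ⁅a, b⁆ ∈ M := by
    intro a ha b hb
    have h1 : ψ ⁅φ.symm ⟨a, ha⟩, φ.symm ⟨b, hb⟩⁆ ∈ M := hcommH _ _
    rwa [map_commutatorElement, hψsymm, hψsymm] at h1
  -- Step 3: M * H is dense in G
  set L : Subgroup G := (M ⊔ H).topologicalClosure with hLdef
  have hML : M ≤ L := le_trans le_sup_left (Subgroup.le_topologicalClosure _)
  have hHL : H ≤ L := le_trans le_sup_right (Subgroup.le_topologicalClosure _)
  haveI hLnormal : L.Normal := Subgroup.is_normal_topologicalClosure _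
  have hsat : ∀ a b : G, (a : G ⧸ H) = (b : G ⧸ H) → a ∈ L → b ∈ L := by
    intro a b hab haL
    have h1 : a⁻¹ * b ∈ H := QuotientGroup.eq.mp hab
    have h2 := L.mul_mem haL (hHL h1)
    simpa using h2
  have hLtop : L = ⊤ := by
    set π : G →* G ⧸ H := QuotientGroup.mk' H with hπdef
    have himg_closed : IsClosed ((Subgroup.map π L : Subgroup (G ⧸ H)) : Set (G ⧸ H)) := by
      rw [← isOpen_compl_iff]
      have hcompl : ((Subgroup.map π L : Subgroup (G ⧸ H)) : Set (G ⧸ H))ᶜ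
          = ((↑) : G → G ⧸ H) '' ((L : Set G)ᶜ) := by
        ext y
        obtain ⟨a, rfl⟩ := QuotientGroup.mk_surjective y
        simp only [Set.mem_compl_iff, SetLike.mem_coe, Subgroup.mem_map, Set.mem_image]
        constructor
        · intro hy
          exact ⟨a, fun haL => hy ⟨a, haL, rfl⟩, rfl⟩
        · rintro ⟨b, hbL, hba⟩ ⟨w, hwL, hwa⟩
          exact hbL (hsat w b (hwa.trans hba.symm) hwL)
      rw [hcompl]
      exact QuotientGroup.isOpenMap_coe _ (Subgroup.isClosed_topologicalClosure _).isOpen_compl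
    haveI hnormal_map : (Subgroup.map π L).Normal :=
      hLnormal.map π (QuotientGroup.mk'_surjective H)
    have hgL : g ∈ L := by
      have h1 := L.mul_mem (hML hmM) (L.inv_mem (hHL (hψmem c)))
      rw [hmdef] at h1
      simpa using h1
    have hxL : ((g : G) : G ⧸ H) ∈ Subgroup.map π L := ⟨g, hgL, rfl⟩
    have h1 : Subgroup.normalClosure {((g : G) : G ⧸ H)} ≤ Subgroup.map π L :=
      Subgroup.normalClosure_le_normal (Set.singleton_subset_iff.2 hxL)
    have h2 := Subgroup.topologicalClosure_minimal _ h1 himg_closed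
    rw [hx] at h2
    have hmapL : Subgroup.map π L = ⊤ := top_le_iff.1 h2
    rw [eq_top_iff]
    intro a _
    have h3 : ((a : G) : G ⧸ H) ∈ Subgroup.map π L := by rw [hmapL]; trivial
    obtain ⟨b, hbL, hba⟩ := h3
    exact hsat b a hba hbL
  have hdense_closure : closure ((M : Set G) * (H : Set G)) = Set.univ := by
    have h1 : ((M : Set G) * (H : Set G)) = ↑(M ⊔ H) := (Subgroup.mul_normal M H).symm
    rw [h1, ← Subgroup.topologicalClosure_coe, ← hLdef, hLtop]
    simp
  -- Step 4: [G, H] ⊆ M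
  have hstep1 : ∀ (a : G), ∀ b ∈ H, ⁅a, b⁆ ∈ M := by
    intro a b hb
    have hclosed : IsClosed {y : G | ⁅y, b⁆ ∈ M} := by
      have h : {y : G | ⁅y, b⁆ ∈ M} = (fun y => y * b * y⁻¹ * b⁻¹) ⁻¹' (M : Set G) := rfl
      rw [h]
      exact hMclosed.preimage
        (((continuous_id.mul continuous_const).mul continuous_inv).mul continuous_const)
    have hsub : (M : Set G) * (H : Set G) ⊆ {y | ⁅y, b⁆ ∈ M} := by
      rintro y ⟨m', hm', u, hu, rfl⟩
      have hid : ⁅m' * u, b⁆ = ⁅m', u * b * u⁻¹⁆ * ⁅u, b⁆ := by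
        simp only [commutatorElement_def]; group
      rw [Set.mem_setOf_eq, hid]
      exact M.mul_mem (comm_mem_left' hMnormal hm' _) (hcommHG u hu b hb)
    have h2 : closure ((M : Set G) * (H : Set G)) ⊆ {y | ⁅y, b⁆ ∈ M} := by
      rw [← hclosed.closure_eq]
      exact closure_mono hsub
    exact h2 (by rw [hdense_closure]; trivial)
  -- Step 5: [G, G] ⊆ M
  have hstep2 : ∀ a b : G, ⁅a, b⁆ ∈ M := by
    intro a b
    have hclosed : IsClosed {y : G | ⁅a, y⁆ ∈ M} := by
      have h : {y : G | ⁅a, y⁆ ∈ M} = (fun y => a * y * a⁻¹ * y⁻¹) ⁻¹' (M : Set G) := rfl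
      rw [h]
      exact hMclosed.preimage
        (((continuous_const.mul continuous_id).mul continuous_const).mul continuous_inv)
    have hsub : (M : Set G) * (H : Set G) ⊆ {y | ⁅a, y⁆ ∈ M} := by
      rintro y ⟨m', hm', u, hu, rfl⟩
      have hid : ⁅a, m' * u⁆ = ⁅a, m'⁆ * (m' * ⁅a, u⁆ * m'⁻¹) := by
        simp only [commutatorElement_def]; group
      rw [Set.mem_setOf_eq, hid]
      exact M.mul_mem (comm_mem_right' hMnormal hm' a)
        (hMnormal.conj_mem _ (hstep1 a u hu) m')
    have h2 : closure ((M : Set G) * (H : Set G)) ⊆ {y | ⁅a, y⁆ ∈ M} := by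
      rw [← hclosed.closure_eq]
      exact closure_mono hsub
    exact h2 (by rw [hdense_closure]; trivial)
  -- Conclusion
  have hcomm_le : commutator G ≤ M := by
    rw [commutator_def, Subgroup.commutator_le]
    intro g1 _ g2 _
    exact hstep2 g1 g2
  rw [eq_top_iff]
  intro a _
  have h1 : a ∈ closure ((commutator G : Subgroup G) : Set G) := by
    rw [hperf.closure_eq]; trivial
  have h2 : closure ((commutator G : Subgroup G) : Set G) ⊆ (M : Set G) := by
    rw [← hMclosed.closure_eq]
    exact closure_mono (SetLike.coe_subset_coe.2 hcomm_le)
  exact h2 h1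
end

section
/- Let S be a non-abelian finite simple group, c ∈ S an element of order 2, F = S × S × S, and K ≤ F the subgroup generated by (1,c,c) and (c,c,1). Then F is normally generated by K, i.e. the smallest normal subgroup of F containing K is F itself. -/
theorem normal_closure_klein_eq_top
    {S : Type*} [Group S] [Finite S] [IsSimpleGroup S]
    (hnonab : ∃ a b : S, a * b ≠ b * a)
    (c : S) (hc : orderOf c = 2) :
    Subgroup.normalClosure
      ((Subgroup.closure {((1 : S), c, c), (c, c, (1 : S))} : Subgroup (S × S × S)) :
        Set (S × S × S)) = ⊤ := by
  set N : Subgroup (S × S × S) := Subgroup.normalClosure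
      ((Subgroup.closure {((1 : S), c, c), (c, c, (1 : S))} : Subgroup (S × S × S)) :
        Set (S × S × S)) with hN
  have hNnorm : N.Normal := Subgroup.normalClosure_normal
  have hcne : c ≠ 1 := by
    intro h
    rw [h, orderOf_one] at hc
    omega
  -- c is not central: any normal subgroup containing all commutators [g,c] is ⊤
  have aux : ∀ (T : Subgroup S), T.Normal → (∀ g : S, g * c * g⁻¹ * c⁻¹ ∈ T) → T = ⊤ := by
    intro T hTn hTc
    rcases hTn.eq_bot_or_eq_top with hbot | htop
    · exfalso
      have hcent : c ∈ Subgroup.center S := by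
        rw [Subgroup.mem_center_iff]
        intro g
        have := hTc g
        rw [hbot, Subgroup.mem_bot] at this
        have : g * c * g⁻¹ = c := by
          have := mul_eq_one_iff_eq_inv.mp this
          simpa using this
        calc g * c = (g * c * g⁻¹) * g := by group
        _ = c * g := by rw [this]
      rcases (Subgroup.Normal.eq_bot_or_eq_top (inferInstance : (Subgroup.center S).Normal)) with hb | ht
      · rw [hb, Subgroup.mem_bot] at hcent; exact hcne hcent
      · obtain ⟨a, b, hab⟩ := hnonab
        have : b ∈ Subgroup.center S := by rw [ht]; trivial
        exact hab ((Subgroup.mem_center_iff.mp this) a)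
    · exact htop
  have ha : ((1 : S), c, c) ∈ N :=
    Subgroup.subset_normalClosure (Subgroup.subset_closure (by simp))
  have hb : (c, c, (1 : S)) ∈ N :=
    Subgroup.subset_normalClosure (Subgroup.subset_closure (by simp))
  -- commutators in each coordinate
  have h1 : ∀ g : S, (g * c * g⁻¹ * c⁻¹, (1 : S), (1 : S)) ∈ N := by
    intro g
    have hconj : (g, (1:S), (1:S)) * (c, c, (1 : S)) * (g, (1:S), (1:S))⁻¹ ∈ N :=
      hNnorm.conj_mem _ hb _
    have := mul_mem hconj (inv_mem hb)
    simpa [Prod.ext_iff, mul_assoc] using this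
  have h2 : ∀ g : S, ((1 : S), g * c * g⁻¹ * c⁻¹, (1 : S)) ∈ N := by
    intro g
    have hconj : ((1:S), g, (1:S)) * ((1 : S), c, c) * ((1:S), g, (1:S))⁻¹ ∈ N :=
      hNnorm.conj_mem _ ha _
    have := mul_mem hconj (inv_mem ha)
    simpa [Prod.ext_iff, mul_assoc] using this
  have h3 : ∀ g : S, ((1 : S), (1 : S), g * c * g⁻¹ * c⁻¹) ∈ N := by
    intro g
    have hconj : ((1:S), (1:S), g) * ((1 : S), c, c) * ((1:S), (1:S), g)⁻¹ ∈ N :=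
      hNnorm.conj_mem _ ha _
    have := mul_mem hconj (inv_mem ha)
    simpa [Prod.ext_iff, mul_assoc] using this
  -- coordinate subgroups
  have full : ∀ (φ : S →* S × S × S), (∀ s t : S, φ (s * t) = φ s * φ t) →
      (∀ g s : S, φ (g * s * g⁻¹) = (φ g) * φ s * (φ g)⁻¹) → True := fun _ _ _ => trivial
  have coord : ∀ (φ : S →* S × S × S), (∀ g : S, φ (g * c * g⁻¹ * c⁻¹) ∈ N) →
      ∀ s : S, φ s ∈ N := by
    intro φ hφ s
    have hTn : (Subgroup.comap φ N).Normal := by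
      constructor
      intro n hn g
      rw [Subgroup.mem_comap] at hn ⊢
      rw [map_mul, map_mul, map_inv]
      exact hNnorm.conj_mem _ hn _
    have := aux (Subgroup.comap φ N) hTn (fun g => by
      rw [Subgroup.mem_comap]; exact hφ g)
    have hs : s ∈ Subgroup.comap φ N := by rw [this]; trivial
    exact hs
  have φ1 : S →* S × S × S := (MonoidHom.id S).prod 1
  rw [eq_top_iff]
  intro x _
  obtain ⟨x1, x2, x3⟩ := x
  have e1 : ((x1 : S), (1:S), (1:S)) ∈ N :=
    coord ((MonoidHom.id S).prod 1) (fun g => h1 g) x1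
  have e2 : ((1:S), (x2 : S), (1:S)) ∈ N :=
    coord ((1 : S →* S).prod ((MonoidHom.id S).prod 1)) (fun g => by simpa using h2 g) x2
  have e3 : ((1:S), (1:S), (x3 : S)) ∈ N :=
    coord ((1 : S →* S).prod ((1 : S →* S).prod (MonoidHom.id S))) (fun g => by simpa using h3 g) x3
  have := mul_mem (mul_mem e1 e2) e3
  simpa [Prod.ext_iff] using this
end

section
/- Let G be a topological group, G⁺ the intersection of all open normal subgroups of G (the discrete residual). If G⁺ is cocompact in G and M₁,…,M_k are closed normal subgroups none of which contains G⁺, and g ∈ G, then the coset gG⁺ is not contained in M₁ ∪ ⋯ ∪ M_k, provided G⁺ has no non-trivial discrete quotient (no proper open normal subgroup). -/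
open Pointwise

theorem coset_not_subset_union_of_discrete_residual
    {G : Type*} [Group G] [TopologicalSpace G] [IsTopologicalGroup G]
    [LocallyCompactSpace G]
    (Gplus : Subgroup G)
    (hGplus : Gplus = sInf {U : Subgroup G | U.Normal ∧ IsOpen (U : Set G)})
    (hcocompact : CompactSpace (G ⧸ Gplus))
    (hnodisc : ∀ V : Subgroup Gplus, V.Normal → IsOpen (V : Set Gplus) → V = ⊤)
    {k : ℕ} (M : Fin k → Subgroup G)
    (hMnormal : ∀ i, (M i).Normal) (hMclosed : ∀ i, IsClosed ((M i) : Set G))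
    (hMne : ∀ i, ¬ Gplus ≤ M i) (g : G) :
    ¬ (g • (Gplus : Set G) ⊆ ⋃ i, ((M i) : Set G)) := by
  intro hsub
  -- Gplus is closed, hence locally compact, hence a Baire space
  have hGclosed : IsClosed (Gplus : Set G) := by
    rw [hGplus, Subgroup.coe_sInf]
    exact isClosed_biInter fun U hU => U.isClosed_of_isOpen hU.2
  haveI : LocallyCompactSpace Gplus := hGclosed.locallyCompactSpace
  -- cover Gplus by the closed sets f i
  set f : Fin k → Set Gplus := fun i => {x : Gplus | g * (x : G) ∈ M i} with hf
  have hfc : ∀ i, IsClosed (f i) := by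
    intro i
    exact (hMclosed i).preimage (by continuity)
  have hfU : ⋃ i, f i = Set.univ := by
    ext x
    simp only [Set.mem_iUnion, Set.mem_univ, iff_true]
    have : g * (x : G) ∈ ⋃ i, ((M i) : Set G) :=
      hsub ⟨(x : G), x.2, rfl⟩
    simpa [hf] using this
  have hne : Nonempty Gplus := ⟨1, Gplus.one_mem⟩
  obtain ⟨i, x₀, hx₀⟩ := nonempty_interior_of_iUnion_of_closed hfc hfU
  -- the subgroup V = (M i).subgroupOf Gplus is open and normal in Gplus
  set V : Subgroup Gplus := (M i).subgroupOf Gplus with hV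
  have hx₀f : x₀ ∈ f i := interior_subset hx₀
  have hVopen : IsOpen (V : Set Gplus) := by
    apply V.isOpen_of_one_mem_interior
    have hsub2 : x₀⁻¹ • f i ⊆ (V : Set Gplus) := by
      rintro y ⟨z, hz, rfl⟩
      have : (g * (x₀ : G))⁻¹ * (g * (z : G)) ∈ M i :=
        (M i).mul_mem ((M i).inv_mem hx₀f) hz
      simpa [hV, Subgroup.mem_subgroupOf, mul_assoc] using this
    have h1 : (1 : Gplus) ∈ x₀⁻¹ • interior (f i) := ⟨x₀, hx₀, by simp⟩
    have ho : IsOpen (x₀⁻¹ • interior (f i)) := isOpen_interior.smul x₀⁻¹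
    exact interior_maximal ((Set.smul_set_mono interior_subset).trans hsub2) ho h1
  have hVtop : V = ⊤ := hnodisc V ((hMnormal i).subgroupOf Gplus) hVopen
  apply hMne i
  intro x hx
  have : (⟨x, hx⟩ : Gplus) ∈ V := hVtop ▸ Subgroup.mem_top _
  simpa [hV, Subgroup.mem_subgroupOf] using this
end
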